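/- Let Δt > 0, a ∈ ℝ, and let f : ℝ → ℝ be twice continuously differentiable on a neighborhood of a with f(a) > 0, f'(a) = 0, f''(a) < 0, and f(a)·Δt² = 4. Then the group-velocity expression V(ξ) = f'(ξ)/(√(4 − f(ξ)·Δt²)·√(f(ξ))) tends to √(−2·f''(a))/(Δt·√(f(a))) as ξ → a from the left; in particular this limit is a strictly positive real number. -/

import Mathlib

open Filter Topology

/-- Critical case of the group-velocity limits: if `f` is `C²` near `a` with
`f(a) > 0`, `f'(a) = 0`, `f''(a) < 0` and `f(a)·Δt² = 4`, then the numerical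
group velocity `V(ξ) = f'(ξ)/(√(4 − f(ξ)Δt²)·√(f(ξ)))` tends, as `ξ → a⁻`,
to the strictly positive value `√(−2f''(a))/(Δt·√(f(a)))`. -/
theorem group_velocity_critical_case
    (Δt a : ℝ) (hΔt : 0 < Δt)
    (f : ℝ → ℝ) (hf : ContDiffAt ℝ 2 f a)
    (hpos : 0 < f a)
    (hderiv : deriv f a = 0)
    (hconc : deriv (deriv f) a < 0)
    (hcrit : f a * Δt ^ 2 = 4) :
    Tendsto (fun ξ : ℝ =>
        deriv f ξ / (Real.sqrt (4 - f ξ * Δt ^ 2) * Real.sqrt (f ξ)))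
      (𝓝[<] a)
      (𝓝 (Real.sqrt (-2 * deriv (deriv f) a) / (Δt * Real.sqrt (f a))))
    ∧ 0 < Real.sqrt (-2 * deriv (deriv f) a) / (Δt * Real.sqrt (f a)) := by
  set B := deriv (deriv f) a with hB
  have hBneg : B < 0 := hconc
  -- get a neighbourhood where f is C²
  obtain ⟨u, hu, hcd⟩ := hf.contDiffOn (le_refl 2) (by simp)
  obtain ⟨s, hsu, hso, has⟩ := mem_nhds_iff.mp hu
  have hcds : ContDiffOn ℝ 2 f s := hcd.mono hsu
  have hfd : ∀ x ∈ s, DifferentiableAt ℝ f x := fun x hx =>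
    ((hcds x hx).contDiffAt (hso.mem_nhds hx)).differentiableAt (by norm_num)
  have hderiv1 : ContDiffOn ℝ 1 (deriv f) s :=
    hcds.deriv_of_isOpen hso (by norm_num)
  have hd2 : HasDerivAt (deriv f) B a := by
    have h := ((hderiv1 a has).contDiffAt (hso.mem_nhds has)).differentiableAt one_ne_zero
    exact h.hasDerivAt
  -- slope limit for deriv f
  have T1 : Tendsto (fun ξ => deriv f ξ / (ξ - a)) (𝓝[≠] a) (𝓝 B) := by
    have h := hasDerivAt_iff_tendsto_slope.mp hd2
    refine h.congr fun ξ => ?_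
    simp [slope_def_field, hderiv]
  have hmono : 𝓝[<] a ≤ 𝓝[≠] a :=
    nhdsWithin_mono a fun x hx => ne_of_lt hx
  have T1' : Tendsto (fun ξ => deriv f ξ / (ξ - a)) (𝓝[<] a) (𝓝 B) :=
    T1.mono_left hmono
  have hmem : ∀ᶠ x in 𝓝[<] a, x ∈ s :=
    eventually_nhdsWithin_of_eventually_nhds (hso.eventually_mem has)
  have hlt : ∀ᶠ x in 𝓝[<] a, x < a := eventually_mem_nhdsWithin
  -- L'Hôpital : (f a - f ξ)/(ξ - a)^2 → -B/2
  have L2 : Tendsto (fun ξ => (f a - f ξ) / (ξ - a) ^ 2) (𝓝[<] a) (𝓝 (-B / 2)) := by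
    have hff' : ∀ᶠ x in 𝓝[<] a,
        HasDerivAt (fun ξ => f a - f ξ) (-(deriv f x)) x := by
      filter_upwards [hmem] with x hx
      exact ((hfd x hx).hasDerivAt).const_sub (f a)
    have hgg' : ∀ᶠ x in 𝓝[<] a,
        HasDerivAt (fun ξ : ℝ => (ξ - a) ^ 2) (2 * (x - a)) x := by
      filter_upwards with x
      have h := ((hasDerivAt_id x).sub_const a).fun_pow 2
      simpa using h
    have hg' : ∀ᶠ x in 𝓝[<] a, 2 * (x - a) ≠ 0 := by
      filter_upwards [hlt] with x hx
      have : x - a < 0 := by linarith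
      nlinarith
    have hfa0 : Tendsto (fun ξ => f a - f ξ) (𝓝[<] a) (𝓝 0) := by
      have h : Tendsto (fun ξ => f a - f ξ) (𝓝 a) (𝓝 (f a - f a)) :=
        tendsto_const_nhds.sub hf.continuousAt.tendsto
      simpa using h.mono_left nhdsWithin_le_nhds
    have hga0 : Tendsto (fun ξ : ℝ => (ξ - a) ^ 2) (𝓝[<] a) (𝓝 0) := by
      have h : Tendsto (fun ξ : ℝ => (ξ - a) ^ 2) (𝓝 a) (𝓝 ((a - a) ^ 2)) :=
        ((continuous_id.sub continuous_const).pow 2).tendsto a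
      simpa using h.mono_left nhdsWithin_le_nhds
    have hdiv : Tendsto (fun x => -(deriv f x) / (2 * (x - a))) (𝓝[<] a) (𝓝 (-B / 2)) := by
      have h := (T1'.div_const 2).neg
      have he : (fun x => -(deriv f x / (x - a) / 2)) =
          fun x => -(deriv f x) / (2 * (x - a)) := by
        funext x; rw [div_div, neg_div, mul_comm]
      rw [he] at h
      simpa [neg_div] using h
    exact HasDerivAt.lhopital_zero_nhdsLT hff' hgg' hg' hfa0 hga0 hdiv
  set c : ℝ := -B / 2 with hc
  have hcpos : 0 < c := by simp [hc]; linarith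
  have hsc : 0 < Real.sqrt c := Real.sqrt_pos.mpr hcpos
  have hsfa : 0 < Real.sqrt (f a) := Real.sqrt_pos.mpr hpos
  -- sqrt of the ratio
  have L2' : Tendsto (fun ξ => Real.sqrt ((f a - f ξ) / (ξ - a) ^ 2)) (𝓝[<] a)
      (𝓝 (Real.sqrt c)) := (Real.continuous_sqrt.tendsto c).comp L2
  -- sqrt (f ξ) tends to sqrt (f a)
  have Tf : Tendsto (fun ξ => Real.sqrt (f ξ)) (𝓝[<] a) (𝓝 (Real.sqrt (f a))) :=
    ((Real.continuous_sqrt.tendsto (f a)).comp hf.continuousAt.tendsto).mono_left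
      nhdsWithin_le_nhds
  -- the auxiliary function W and its limit
  have hden_ne : Δt * Real.sqrt c * Real.sqrt (f a) ≠ 0 := by positivity
  have TW : Tendsto (fun ξ => -(deriv f ξ / (ξ - a)) /
      (Δt * Real.sqrt ((f a - f ξ) / (ξ - a) ^ 2) * Real.sqrt (f ξ))) (𝓝[<] a)
      (𝓝 (-B / (Δt * Real.sqrt c * Real.sqrt (f a)))) :=
    T1'.neg.div (((tendsto_const_nhds.mul L2').mul Tf)) hden_ne
  -- identification of the limit value
  have h1 : Real.sqrt (-2 * B) * Real.sqrt c = -B := by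
    rw [hc, ← Real.sqrt_mul (by linarith)]
    rw [show -2 * B * (-B / 2) = B ^ 2 by ring, Real.sqrt_sq_eq_abs, abs_of_neg hBneg]
  have hval : -B / (Δt * Real.sqrt c * Real.sqrt (f a)) =
      Real.sqrt (-2 * B) / (Δt * Real.sqrt (f a)) := by
    rw [← h1]
    field_simp
  rw [hval] at TW
  -- eventual positivity facts
  have hfxpos : ∀ᶠ x in 𝓝[<] a, 0 < f x :=
    eventually_nhdsWithin_of_eventually_nhds
      (hf.continuousAt.eventually (eventually_gt_nhds hpos))
  have hratio : ∀ᶠ x in 𝓝[<] a, 0 < (f a - f x) / (x - a) ^ 2 :=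
    L2.eventually (eventually_gt_nhds hcpos)
  -- eventual equality of V and W
  have heq : ∀ᶠ x in 𝓝[<] a,
      deriv f x / (Real.sqrt (4 - f x * Δt ^ 2) * Real.sqrt (f x)) =
      -(deriv f x / (x - a)) /
        (Δt * Real.sqrt ((f a - f x) / (x - a) ^ 2) * Real.sqrt (f x)) := by
    filter_upwards [hlt, hratio] with x hxa hr
    have hax : 0 < a - x := by linarith
    have hxane : x - a ≠ 0 := sub_ne_zero.mpr (ne_of_lt hxa)
    have hsq : 0 < (x - a) ^ 2 := by positivity
    have hfafx : 0 < f a - f x := by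
      have h := mul_pos hr hsq
      rwa [div_mul_cancel₀ _ (ne_of_gt hsq)] at h
    have e1 : 4 - f x * Δt ^ 2 = Δt ^ 2 * (f a - f x) := by rw [← hcrit]; ring
    have e2 : Real.sqrt (Δt ^ 2 * (f a - f x)) = Δt * Real.sqrt (f a - f x) := by
      rw [Real.sqrt_mul (sq_nonneg _), Real.sqrt_sq hΔt.le]
    have e3 : Real.sqrt ((f a - f x) / (x - a) ^ 2) =
        Real.sqrt (f a - f x) / (a - x) := by
      rw [Real.sqrt_div hfafx.le, Real.sqrt_sq_eq_abs,
        abs_of_neg (by linarith : x - a < 0), neg_sub]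
    rw [e1, e2, e3]
    rw [show -(deriv f x / (x - a)) = deriv f x / (a - x) by
      rw [← div_neg, neg_sub]]
    rw [div_div]
    congr 1
    field_simp
  refine ⟨TW.congr' (heq.mono fun x hx => hx.symm), ?_⟩
  have h2B : 0 < Real.sqrt (-2 * B) := Real.sqrt_pos.mpr (by linarith)
  positivity
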